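/- For every R > 0, every C > 0, and every positive integer n, there exists a real-valued Schwartz function φ on ℝ such that |φ(x)| ≤ 1 for all x ∈ ℝ, |φ(x) − 1| ≤ 1/n for all x with |x| ≤ R, and C·∫_ℝ |φ̂(λ)|²·|λ| dλ ≤ 1/n, where φ̂(λ) = ∫_ℝ φ(x)·e^{−2πiλx} dx is the Fourier transform of φ. -/

import Mathlib

open MeasureTheory Filter Finset
open scoped Real

noncomputable section
namespace Stmt16

lemma pow_div_factorial_le_exp {t : ℝ} (ht : 0 ≤ t) (m : ℕ) :
    t ^ m / m.factorial ≤ Real.exp t := by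
  calc t ^ m / m.factorial ≤ ∑ i ∈ Finset.range (m + 1), t ^ i / i.factorial := by
        refine Finset.single_le_sum (f := fun i => t ^ i / i.factorial) ?_ ?_
        · intro i _; positivity
        · exact Finset.self_mem_range_succ m
    _ ≤ Real.exp t := Real.sum_le_exp_of_nonneg ht _

lemma abs_pow_mul_exp_le {b : ℝ} (hb : 0 < b) (m : ℕ) (x : ℝ) :
    |x| ^ m * Real.exp (-b * x ^ 2) ≤ max 1 (m.factorial / b ^ m) := by
  have he1 : Real.exp (-b * x ^ 2) ≤ 1 := by
    rw [← Real.exp_zero]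
    exact Real.exp_le_exp.2 (by nlinarith [sq_nonneg x])
  rcases le_or_gt (|x|) 1 with h | h
  · refine le_trans ?_ (le_max_left _ _)
    have := pow_le_one₀ (abs_nonneg x) h (n := m)
    nlinarith [Real.exp_pos (-b * x ^ 2), pow_nonneg (abs_nonneg x) m]
  · refine le_trans ?_ (le_max_right _ _)
    have hx2 : |x| ^ m ≤ (x ^ 2) ^ m := by
      apply pow_le_pow_left₀ (abs_nonneg x)
      nlinarith [abs_nonneg x, sq_abs x]
    have key := pow_div_factorial_le_exp (t := b * x ^ 2) (by positivity) m
    have hbm : (0:ℝ) < b ^ m := by positivity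
    have hkey : (x ^ 2) ^ m ≤ m.factorial / b ^ m * Real.exp (b * x ^ 2) := by
      rw [mul_pow] at key
      rw [div_mul_eq_mul_div, le_div_iff₀ hbm]
      calc (x ^ 2) ^ m * b ^ m = b ^ m * (x ^ 2) ^ m := by ring
        _ ≤ m.factorial * Real.exp (b * x ^ 2) := by
            rw [div_le_iff₀ (by positivity : (0:ℝ) < (m.factorial:ℝ))] at key
            linarith [key]
    have hexp : Real.exp (b * x ^ 2) * Real.exp (-b * x ^ 2) = 1 := by
      rw [← Real.exp_add]; ring_nf; exact Real.exp_zero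
    calc |x| ^ m * Real.exp (-b * x ^ 2) ≤ (x ^ 2) ^ m * Real.exp (-b * x ^ 2) := by
          exact mul_le_mul_of_nonneg_right hx2 (Real.exp_pos _).le
      _ ≤ (m.factorial / b ^ m * Real.exp (b * x ^ 2)) * Real.exp (-b * x ^ 2) := by
          exact mul_le_mul_of_nonneg_right hkey (Real.exp_pos _).le
      _ = m.factorial / b ^ m := by rw [mul_assoc, hexp, mul_one]

lemma iteratedDeriv_gaussian (b : ℝ) (n : ℕ) :
    ∃ p : Polynomial ℝ, iteratedDeriv n (fun x : ℝ => Real.exp (-b * x ^ 2)) =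
      fun x => Polynomial.eval x p * Real.exp (-b * x ^ 2) := by
  induction n with
  | zero => exact ⟨1, by funext x; simp⟩
  | succ n ih =>
    obtain ⟨p, hp⟩ := ih
    refine ⟨Polynomial.derivative p + Polynomial.C (-2 * b) * (Polynomial.X * p), ?_⟩
    rw [iteratedDeriv_succ, hp]
    funext x
    have h1 : HasDerivAt (fun x : ℝ => -b * x ^ 2) (-b * (2 * x)) x := by
      simpa using (hasDerivAt_pow 2 x).const_mul (-b)
    have h2 := h1.exp
    have h3 : HasDerivAt (fun x => Polynomial.eval x p * Real.exp (-b * x ^ 2)) _ x :=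
      (Polynomial.hasDerivAt p x).mul h2
    rw [h3.deriv]
    simp only [Polynomial.eval_add, Polynomial.eval_mul, Polynomial.eval_C, Polynomial.eval_X]
    ring

def gaussian (b : ℝ) (hb : 0 < b) : SchwartzMap ℝ ℝ where
  toFun := fun x => Real.exp (-b * x ^ 2)
  smooth' := by
    exact Real.contDiff_exp.comp (contDiff_const.mul (contDiff_id.pow 2))
  decay' := by
    intro k n
    obtain ⟨p, hp⟩ := iteratedDeriv_gaussian b n
    refine ⟨∑ i ∈ Finset.range (p.natDegree + 1),
      |p.coeff i| * max 1 ((k + i).factorial / b ^ (k + i)), fun x => ?_⟩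
    rw [norm_iteratedFDeriv_eq_norm_iteratedDeriv, hp]
    have hep : |Polynomial.eval x p| ≤ ∑ i ∈ Finset.range (p.natDegree + 1),
        |p.coeff i| * |x| ^ i := by
      conv_lhs => rw [Polynomial.eval_eq_sum_range]
      refine (Finset.abs_sum_le_sum_abs _ _).trans (le_of_eq ?_)
      exact Finset.sum_congr rfl fun i _ => by rw [abs_mul, abs_pow]
    have hexp : (0:ℝ) < Real.exp (-b * x ^ 2) := Real.exp_pos _
    calc ‖x‖ ^ k * ‖Polynomial.eval x p * Real.exp (-b * x ^ 2)‖
        = |Polynomial.eval x p| * (|x| ^ k * Real.exp (-b * x ^ 2)) := by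
          rw [Real.norm_eq_abs, Real.norm_eq_abs, abs_mul, abs_of_pos hexp]; ring
      _ ≤ (∑ i ∈ Finset.range (p.natDegree + 1), |p.coeff i| * |x| ^ i) *
            (|x| ^ k * Real.exp (-b * x ^ 2)) := by
          exact mul_le_mul_of_nonneg_right hep (by positivity)
      _ = ∑ i ∈ Finset.range (p.natDegree + 1),
            |p.coeff i| * (|x| ^ (k + i) * Real.exp (-b * x ^ 2)) := by
          rw [Finset.sum_mul]
          exact Finset.sum_congr rfl fun i _ => by rw [pow_add]; ring
      _ ≤ ∑ i ∈ Finset.range (p.natDegree + 1),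
            |p.coeff i| * max 1 ((k + i).factorial / b ^ (k + i)) := by
          refine Finset.sum_le_sum fun i _ => ?_
          exact mul_le_mul_of_nonneg_left (abs_pow_mul_exp_le hb _ x) (abs_nonneg _)

@[simp] lemma gaussian_apply (b : ℝ) (hb : 0 < b) (x : ℝ) :
    gaussian b hb x = Real.exp (-b * x ^ 2) := rfl

end Stmt16



namespace Stmt16b

lemma integrable_gauss_char (b : ℝ) (hb : 0 < b) (lam : ℝ) :
    Integrable fun x : ℝ => Complex.exp (-(b:ℂ) * (x:ℂ) ^ 2) *
      Complex.exp (-2 * (Real.pi:ℂ) * Complex.I * (lam:ℂ) * (x:ℂ)) := by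
  have h := integrable_cexp_quadratic (b := (b:ℂ)) (by simpa using hb)
    (-2 * (Real.pi:ℂ) * Complex.I * (lam:ℂ)) 0
  refine h.congr (Filter.Eventually.of_forall fun x => ?_)
  show Complex.exp _ = _
  rw [add_zero, Complex.exp_add]

lemma gauss_fourier (T : ℝ) (hT : 0 < T) (lam : ℝ) :
    ∫ x : ℝ, Complex.exp (-((Real.pi / T ^ 2 : ℝ) : ℂ) * (x:ℂ) ^ 2) *
      Complex.exp (-2 * (Real.pi:ℂ) * Complex.I * (lam:ℂ) * (x:ℂ)) =
      ((T * Real.exp (-(Real.pi * T ^ 2) * lam ^ 2) : ℝ) : ℂ) := by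
  have hb : 0 < ((Real.pi / T ^ 2 : ℝ) : ℂ).re := by
    rw [Complex.ofReal_re]; positivity
  have h := fourierIntegral_gaussian hb (-2 * (Real.pi:ℂ) * (lam:ℂ))
  have heq : (∫ x : ℝ, Complex.exp (-((Real.pi / T ^ 2 : ℝ) : ℂ) * (x:ℂ) ^ 2) *
      Complex.exp (-2 * (Real.pi:ℂ) * Complex.I * (lam:ℂ) * (x:ℂ))) =
      ∫ x : ℝ, Complex.exp (Complex.I * (-2 * (Real.pi:ℂ) * (lam:ℂ)) * (x:ℂ)) *
        Complex.exp (-((Real.pi / T ^ 2 : ℝ) : ℂ) * (x:ℂ) ^ 2) := by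
    congr 1; funext x
    rw [mul_comm]
    congr 2
    ring
  rw [heq, h]
  have hπ : (Real.pi:ℂ) ≠ 0 := Complex.ofReal_ne_zero.2 Real.pi_ne_zero
  have hT' : (T:ℂ) ≠ 0 := Complex.ofReal_ne_zero.2 hT.ne'
  have h1 : ((Real.pi:ℂ) / ((Real.pi / T ^ 2 : ℝ) : ℂ)) = ((T ^ 2 : ℝ) : ℂ) := by
    push_cast
    field_simp
  have h2 : (((T ^ 2 : ℝ) : ℂ)) ^ (1 / 2 : ℂ) = (T : ℂ) := by
    rw [show (1 / 2 : ℂ) = ((1 / 2 : ℝ) : ℂ) by norm_num,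
      ← Complex.ofReal_cpow (by positivity)]
    norm_cast
    rw [← Real.rpow_natCast T 2, ← Real.rpow_mul hT.le]
    norm_num
  have h3 : -(-2 * (Real.pi:ℂ) * (lam:ℂ)) ^ 2 / (4 * ((Real.pi / T ^ 2 : ℝ) : ℂ)) =
      ((-(Real.pi * T ^ 2) * lam ^ 2 : ℝ) : ℂ) := by
    push_cast
    field_simp
    ring
  rw [h1, h2, h3, ← Complex.ofReal_exp, ← Complex.ofReal_mul]

lemma integrable_exp_sq_abs (a : ℝ) (ha : 0 < a) :
    Integrable fun lam : ℝ => Real.exp (-a * lam ^ 2) * |lam| := by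
  have h := (integrable_mul_exp_neg_mul_sq ha).abs
  refine h.congr (Filter.Eventually.of_forall fun x => ?_)
  show |x * Real.exp (-a * x ^ 2)| = _
  rw [abs_mul, abs_of_pos (Real.exp_pos _)]
  ring

lemma integral_exp_sq_abs (a : ℝ) (ha : 0 < a) :
    ∫ lam : ℝ, Real.exp (-a * lam ^ 2) * |lam| = a⁻¹ := by
  have hIoi : ∫ u in Set.Ioi (0:ℝ), u * Real.exp (-a * u ^ 2) = (2 * a)⁻¹ := by
    have hc := integral_mul_cexp_neg_mul_sq (b := (a:ℂ)) (by simpa using ha)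
    have h0 : ∫ u in Set.Ioi (0:ℝ), ((u * Real.exp (-a * u ^ 2) : ℝ) : ℂ) =
        ∫ u in Set.Ioi (0:ℝ), (u:ℂ) * Complex.exp (-(a:ℂ) * (u:ℂ) ^ 2) := by
      congr 1; funext u; push_cast [Complex.ofReal_exp]; ring_nf
    have h1 : ∫ u in Set.Ioi (0:ℝ), ((u * Real.exp (-a * u ^ 2) : ℝ) : ℂ) =
        ((∫ u in Set.Ioi (0:ℝ), u * Real.exp (-a * u ^ 2) : ℝ) : ℂ) :=
      _root_.integral_ofReal
    rw [h0, hc] at h1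
    have h2 : ((2 * a : ℝ)⁻¹ : ℂ) = (2 * (a:ℂ))⁻¹ := by push_cast; ring_nf
    rw [← h2] at h1
    exact_mod_cast h1.symm
  have h2 := _root_.integral_comp_abs (f := fun u : ℝ => Real.exp (-a * u ^ 2) * u)
  have h3 : (∫ lam : ℝ, Real.exp (-a * lam ^ 2) * |lam|) =
      ∫ lam : ℝ, (fun u : ℝ => Real.exp (-a * u ^ 2) * u) |lam| := by
    congr 1; funext lam; show _ = Real.exp (-a * |lam| ^ 2) * |lam|
    rw [_root_.sq_abs]
  have h4 : ∫ u in Set.Ioi (0:ℝ), Real.exp (-a * u ^ 2) * u =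
      ∫ u in Set.Ioi (0:ℝ), u * Real.exp (-a * u ^ 2) := by
    congr 1; funext u; ring
  rw [h3, h2, h4, hIoi]
  field_simp

end Stmt16b



namespace Stmt16c

lemma row_bound (m j : ℕ) (hj : j < m) :
    ∑ k ∈ range m, (2:ℝ) ^ j * 2 ^ k / (((2:ℝ) ^ j) ^ 2 + ((2:ℝ) ^ k) ^ 2) ≤ 3 := by
  have h2j : (0:ℝ) < 2 ^ j := by positivity
  have hsplit : ∑ k ∈ range m, (2:ℝ) ^ j * 2 ^ k / (((2:ℝ) ^ j) ^ 2 + ((2:ℝ) ^ k) ^ 2) =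
      (∑ k ∈ range (j+1), (2:ℝ) ^ j * 2 ^ k / (((2:ℝ) ^ j) ^ 2 + ((2:ℝ) ^ k) ^ 2)) +
      ∑ k ∈ Ico (j+1) m, (2:ℝ) ^ j * 2 ^ k / (((2:ℝ) ^ j) ^ 2 + ((2:ℝ) ^ k) ^ 2) := by
    rw [range_eq_Ico, range_eq_Ico]
    exact (Finset.sum_Ico_consecutive (fun k => (2:ℝ) ^ j * 2 ^ k / (((2:ℝ) ^ j) ^ 2 + ((2:ℝ) ^ k) ^ 2)) (Nat.zero_le _) hj).symm
  rw [hsplit]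
  have part1 : ∑ k ∈ range (j+1), (2:ℝ) ^ j * 2 ^ k / (((2:ℝ) ^ j) ^ 2 + ((2:ℝ) ^ k) ^ 2)
      ≤ 2 := by
    have hterm : ∀ k ∈ range (j+1),
        (2:ℝ) ^ j * 2 ^ k / (((2:ℝ) ^ j) ^ 2 + ((2:ℝ) ^ k) ^ 2) ≤ 2 ^ k / 2 ^ j := by
      intro k _
      have h2k : (0:ℝ) < 2 ^ k := by positivity
      have : (2:ℝ) ^ j * 2 ^ k / (((2:ℝ) ^ j) ^ 2 + ((2:ℝ) ^ k) ^ 2)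
          ≤ (2:ℝ) ^ j * 2 ^ k / ((2:ℝ) ^ j) ^ 2 := by
        apply div_le_div_of_nonneg_left (by positivity) (by positivity) (by nlinarith)
      refine this.trans (le_of_eq ?_)
      rw [pow_two, mul_div_mul_left _ _ h2j.ne']
    refine (Finset.sum_le_sum hterm).trans ?_
    rw [← Finset.sum_div]
    rw [geom_sum_eq (by norm_num : (2:ℝ) ≠ 1)]
    rw [div_le_iff₀ h2j]
    have : (2:ℝ) ^ (j+1) = 2 * 2 ^ j := by rw [pow_succ]; ring
    rw [this]
    norm_num
  have part2 : ∑ k ∈ Ico (j+1) m, (2:ℝ) ^ j * 2 ^ k / (((2:ℝ) ^ j) ^ 2 + ((2:ℝ) ^ k) ^ 2)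
      ≤ 1 := by
    have hterm : ∀ k ∈ Ico (j+1) m,
        (2:ℝ) ^ j * 2 ^ k / (((2:ℝ) ^ j) ^ 2 + ((2:ℝ) ^ k) ^ 2)
          ≤ 2 ^ j * (1/2 : ℝ) ^ k := by
      intro k _
      have h2k : (0:ℝ) < 2 ^ k := by positivity
      have h1 : (2:ℝ) ^ j * 2 ^ k / (((2:ℝ) ^ j) ^ 2 + ((2:ℝ) ^ k) ^ 2)
          ≤ (2:ℝ) ^ j * 2 ^ k / ((2:ℝ) ^ k) ^ 2 := by
        apply div_le_div_of_nonneg_left (by positivity) (by positivity) (by nlinarith)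
      refine h1.trans (le_of_eq ?_)
      rw [pow_two]
      rw [show (2:ℝ) ^ j * 2 ^ k / (2 ^ k * 2 ^ k) = 2 ^ j / 2 ^ k by
        rw [mul_comm ((2:ℝ)^j) (2^k), mul_div_mul_left _ _ h2k.ne']]
      rw [one_div, inv_pow, ← div_eq_mul_inv]
    refine (Finset.sum_le_sum hterm).trans ?_
    rw [← Finset.mul_sum]
    rw [geom_sum_Ico (by norm_num : (1/2:ℝ) ≠ 1) hj]
    rw [show ((1/2:ℝ) ^ m - (1/2:ℝ) ^ (j+1)) / ((1/2:ℝ) - 1)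
        = 2 * ((1/2:ℝ) ^ (j+1) - (1/2:ℝ) ^ m) by ring]
    have hj2 : ((1:ℝ)/2) ^ (j+1) = (1/2) * (1/2) ^ j := by rw [pow_succ]; ring
    have hprod : (2:ℝ) ^ j * (1/2) ^ j = 1 := by
      rw [← mul_pow]; norm_num
    have hm0 : (0:ℝ) ≤ (1/2) ^ m := by positivity
    have := mul_pos h2j (by positivity : (0:ℝ) < (1/2:ℝ) ^ j)
    nlinarith [hm0, hprod, hj2, h2j]
  linarith

end Stmt16c

end

open MeasureTheory Filter

set_option maxHeartbeats 1600000 in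
theorem stmt_16 (R C : ℝ) (hR : 0 < R) (hC : 0 < C) (n : ℕ) (hn : 0 < n) :
    ∃ φ : SchwartzMap ℝ ℝ,
      (∀ x : ℝ, |φ x| ≤ 1) ∧
      (∀ x : ℝ, |x| ≤ R → |φ x - 1| ≤ 1 / n) ∧
      C * (∫ lam : ℝ,
          ‖∫ x : ℝ, (φ x : ℂ) * Complex.exp (-2 * Real.pi * Complex.I * lam * x)‖ ^ 2
            * |lam|) ≤ 1 / n := by
  classical
  have hn' : (0:ℝ) < n := by exact_mod_cast hn
  set M : ℕ := n * (Nat.ceil C + 1) with hMdef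
  have hM : 0 < M := Nat.mul_pos hn (Nat.succ_pos _)
  have hMR : (0:ℝ) < M := by exact_mod_cast hM
  set T : ℕ → ℝ := fun k => (2 * R * n) * 2 ^ k with hTdef
  have hT : ∀ k, 0 < T k := fun k => by
    simp only [hTdef]; positivity
  have hb : ∀ k, 0 < Real.pi / (T k) ^ 2 :=
    fun k => div_pos Real.pi_pos (pow_pos (hT k) 2)
  set Φ : SchwartzMap ℝ ℝ :=
    (M:ℝ)⁻¹ • ∑ k ∈ Finset.range M, Stmt16.gaussian (Real.pi / (T k) ^ 2) (hb k) with hΦdef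
  have hφx : ∀ x : ℝ,
      Φ x = (M:ℝ)⁻¹ * ∑ k ∈ Finset.range M, Real.exp (-(Real.pi / (T k) ^ 2) * x ^ 2) := by
    intro x
    rw [hΦdef, SchwartzMap.smul_apply, smul_eq_mul]
    congr 1
    have hs : ⇑(∑ k ∈ Finset.range M, Stmt16.gaussian (Real.pi / (T k) ^ 2) (hb k))
        = ∑ k ∈ Finset.range M, ⇑(Stmt16.gaussian (Real.pi / (T k) ^ 2) (hb k)) := by
      exact map_sum (FunLike.coeAddMonoidHom (SchwartzMap ℝ ℝ) ℝ ℝ)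
          (fun k => Stmt16.gaussian (Real.pi / (T k) ^ 2) (hb k)) (Finset.range M)
    rw [hs, Finset.sum_apply]
    exact Finset.sum_congr rfl fun k _ => rfl
  have hub : ∀ x : ℝ,
      (M:ℝ)⁻¹ * ∑ k ∈ Finset.range M, Real.exp (-(Real.pi / (T k) ^ 2) * x ^ 2) ≤ 1 := by
    intro x
    have hsum : ∑ k ∈ Finset.range M, Real.exp (-(Real.pi / (T k) ^ 2) * x ^ 2) ≤ M := by
      calc ∑ k ∈ Finset.range M, Real.exp (-(Real.pi / (T k) ^ 2) * x ^ 2)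
          ≤ ∑ _k ∈ Finset.range M, (1:ℝ) := by
            refine Finset.sum_le_sum fun k _ => ?_
            rw [← Real.exp_zero]
            exact Real.exp_le_exp.2 (by nlinarith [sq_nonneg x, hb k])
        _ = M := by simp
    calc (M:ℝ)⁻¹ * ∑ k ∈ Finset.range M, Real.exp (-(Real.pi / (T k) ^ 2) * x ^ 2)
        ≤ (M:ℝ)⁻¹ * M := mul_le_mul_of_nonneg_left hsum (inv_nonneg.2 hMR.le)
      _ = 1 := inv_mul_cancel₀ hMR.ne'
  refine ⟨Φ, ?_, ?_, ?_⟩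
  · intro x
    rw [hφx x]
    have h0 : 0 ≤ (M:ℝ)⁻¹ * ∑ k ∈ Finset.range M, Real.exp (-(Real.pi / (T k) ^ 2) * x ^ 2) := by
      have : 0 ≤ ∑ k ∈ Finset.range M, Real.exp (-(Real.pi / (T k) ^ 2) * x ^ 2) :=
        Finset.sum_nonneg fun k _ => (Real.exp_pos _).le
      positivity
    rw [abs_of_nonneg h0]
    exact hub x
  · intro x hx
    rw [hφx x]
    have hge : 1 - 1/(n:ℝ) ≤
        (M:ℝ)⁻¹ * ∑ k ∈ Finset.range M, Real.exp (-(Real.pi / (T k) ^ 2) * x ^ 2) := by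
      have hterm : ∀ k ∈ Finset.range M,
          1 - 1/(n:ℝ) ≤ Real.exp (-(Real.pi / (T k) ^ 2) * x ^ 2) := by
        intro k _
        have h1 := Real.add_one_le_exp (-(Real.pi / (T k) ^ 2) * x ^ 2)
        have hx2 : x ^ 2 ≤ R ^ 2 := by
          nlinarith [neg_abs_le x, le_abs_self x, abs_nonneg x]
        have hTk : T 0 ≤ T k := by
          simp only [hTdef]
          have h2k : (1:ℝ) ≤ 2 ^ k := one_le_pow₀ (by norm_num)
          nlinarith [mul_pos (mul_pos two_pos hR) hn']
        have hT02 : (T 0) ^ 2 ≤ (T k) ^ 2 := by nlinarith [hT 0, hT k]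
        have h3 : Real.pi / (T k) ^ 2 ≤ Real.pi / (T 0) ^ 2 :=
          div_le_div_of_nonneg_left Real.pi_pos.le (pow_pos (hT 0) 2) hT02
        have h4 : Real.pi / (T 0) ^ 2 * R ^ 2 ≤ 1/(n:ℝ) := by
          have hT0 : T 0 = 2 * R * n := by simp [hTdef]
          rw [hT0, div_mul_eq_mul_div, div_le_div_iff₀ (by positivity) hn']
          have hπ4 : Real.pi ≤ 4 := Real.pi_le_four
          have hn1 : (1:ℝ) ≤ n := by exact_mod_cast hn
          nlinarith [sq_nonneg R, mul_pos hR hn']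
        have h5 : Real.pi / (T k) ^ 2 * x ^ 2 ≤ 1/(n:ℝ) := by
          calc Real.pi / (T k) ^ 2 * x ^ 2 ≤ Real.pi / (T 0) ^ 2 * x ^ 2 :=
                mul_le_mul_of_nonneg_right h3 (sq_nonneg x)
            _ ≤ Real.pi / (T 0) ^ 2 * R ^ 2 :=
                mul_le_mul_of_nonneg_left hx2 (div_pos Real.pi_pos (pow_pos (hT 0) 2)).le
            _ ≤ 1/(n:ℝ) := h4
        nlinarith [h1]
      have hsum : (M:ℝ) * (1 - 1/(n:ℝ)) ≤
          ∑ k ∈ Finset.range M, Real.exp (-(Real.pi / (T k) ^ 2) * x ^ 2) := by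
        calc (M:ℝ) * (1 - 1/(n:ℝ)) = ∑ _k ∈ Finset.range M, (1 - 1/(n:ℝ)) := by
              rw [Finset.sum_const, Finset.card_range, nsmul_eq_mul]
          _ ≤ _ := Finset.sum_le_sum hterm
      calc 1 - 1/(n:ℝ) = (M:ℝ)⁻¹ * ((M:ℝ) * (1 - 1/(n:ℝ))) := by
            field_simp
        _ ≤ _ := mul_le_mul_of_nonneg_left hsum (inv_nonneg.2 hMR.le)
    rw [abs_le]
    constructor
    · linarith
    · linarith [hub x, one_div_pos.2 hn']
  · -- the Fourier estimate
    have hinner : ∀ lam : ℝ,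
        (∫ x : ℝ, (Φ x : ℂ) * Complex.exp (-2 * Real.pi * Complex.I * lam * x))
          = (((M:ℝ)⁻¹ * ∑ k ∈ Finset.range M,
              T k * Real.exp (-(Real.pi * (T k) ^ 2) * lam ^ 2) : ℝ) : ℂ) := by
      intro lam
      have hfun : (fun x : ℝ => (Φ x : ℂ) * Complex.exp (-2 * Real.pi * Complex.I * lam * x))
          = fun x : ℝ => ∑ k ∈ Finset.range M, (M:ℂ)⁻¹ *
              (Complex.exp (-((Real.pi / (T k) ^ 2 : ℝ) : ℂ) * (x:ℂ) ^ 2) *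
               Complex.exp (-2 * (Real.pi:ℂ) * Complex.I * (lam:ℂ) * (x:ℂ))) := by
        funext x
        rw [hφx x]
        rw [Complex.ofReal_mul, Complex.ofReal_sum]
        simp only [Complex.ofReal_exp, Complex.ofReal_mul, Complex.ofReal_neg,
          Complex.ofReal_pow, Complex.ofReal_inv, Complex.ofReal_natCast]
        rw [Finset.mul_sum, Finset.sum_mul]
        exact Finset.sum_congr rfl fun k _ => by ring
      rw [hfun]
      rw [MeasureTheory.integral_finset_sum _
        (fun k _ => (Stmt16b.integrable_gauss_char _ (hb k) lam).const_mul _)]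
      have hterm : ∀ k ∈ Finset.range M,
          (∫ x : ℝ, (M:ℂ)⁻¹ *
            (Complex.exp (-((Real.pi / (T k) ^ 2 : ℝ) : ℂ) * (x:ℂ) ^ 2) *
             Complex.exp (-2 * (Real.pi:ℂ) * Complex.I * (lam:ℂ) * (x:ℂ))))
          = (M:ℂ)⁻¹ * ((T k * Real.exp (-(Real.pi * (T k) ^ 2) * lam ^ 2) : ℝ) : ℂ) := by
        intro k _
        rw [MeasureTheory.integral_const_mul, Stmt16b.gauss_fourier (T k) (hT k) lam]
      rw [Finset.sum_congr rfl hterm, ← Finset.mul_sum]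
      rw [Complex.ofReal_mul, Complex.ofReal_sum]
      simp only [Complex.ofReal_inv, Complex.ofReal_natCast]
    have hpos : ∀ j k : ℕ, (0:ℝ) < Real.pi * ((T j) ^ 2 + (T k) ^ 2) := by
      intro j k
      have := pow_pos (hT j) 2
      have := pow_pos (hT k) 2
      nlinarith [Real.pi_pos]
    have houter : (fun lam : ℝ =>
        ‖∫ x : ℝ, (Φ x : ℂ) * Complex.exp (-2 * Real.pi * Complex.I * lam * x)‖ ^ 2 * |lam|)
        = fun lam : ℝ => ((M:ℝ)⁻¹) ^ 2 * ∑ j ∈ Finset.range M, ∑ k ∈ Finset.range M,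
            (T j * T k) * (Real.exp (-(Real.pi * ((T j) ^ 2 + (T k) ^ 2)) * lam ^ 2) * |lam|) := by
      funext lam
      rw [hinner lam, Complex.norm_real, Real.norm_eq_abs, _root_.sq_abs]
      rw [mul_pow, pow_two (∑ k ∈ Finset.range M, T k * Real.exp (-(Real.pi * (T k) ^ 2) * lam ^ 2)),
        Finset.sum_mul_sum, mul_assoc, Finset.sum_mul]
      congr 1
      refine Finset.sum_congr rfl fun j _ => ?_
      rw [Finset.sum_mul]
      refine Finset.sum_congr rfl fun k _ => ?_
      have hE : Real.exp (-(Real.pi * (T j) ^ 2) * lam ^ 2) *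
          Real.exp (-(Real.pi * (T k) ^ 2) * lam ^ 2)
          = Real.exp (-(Real.pi * ((T j) ^ 2 + (T k) ^ 2)) * lam ^ 2) := by
        rw [← Real.exp_add]; congr 1; ring
      calc (T j * Real.exp (-(Real.pi * (T j) ^ 2) * lam ^ 2)) *
            (T k * Real.exp (-(Real.pi * (T k) ^ 2) * lam ^ 2)) * |lam|
          = (T j * T k) * ((Real.exp (-(Real.pi * (T j) ^ 2) * lam ^ 2) *
              Real.exp (-(Real.pi * (T k) ^ 2) * lam ^ 2)) * |lam|) := by ring
        _ = _ := by rw [hE]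
    rw [houter]
    have hIcalc : (∫ lam : ℝ, ((M:ℝ)⁻¹) ^ 2 * ∑ j ∈ Finset.range M, ∑ k ∈ Finset.range M,
            (T j * T k) * (Real.exp (-(Real.pi * ((T j) ^ 2 + (T k) ^ 2)) * lam ^ 2) * |lam|))
        = ((M:ℝ)⁻¹) ^ 2 * ∑ j ∈ Finset.range M, ∑ k ∈ Finset.range M,
            (T j * T k) * (Real.pi * ((T j) ^ 2 + (T k) ^ 2))⁻¹ := by
      rw [MeasureTheory.integral_const_mul]
      congr 1
      rw [MeasureTheory.integral_finset_sum _ (fun j _ =>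
        integrable_finset_sum _ (fun k _ =>
          (Stmt16b.integrable_exp_sq_abs _ (hpos j k)).const_mul _))]
      refine Finset.sum_congr rfl fun j _ => ?_
      rw [MeasureTheory.integral_finset_sum _ (fun k _ =>
        (Stmt16b.integrable_exp_sq_abs _ (hpos j k)).const_mul _)]
      refine Finset.sum_congr rfl fun k _ => ?_
      rw [MeasureTheory.integral_const_mul, Stmt16b.integral_exp_sq_abs _ (hpos j k)]
    rw [hIcalc]
    have hrow : ∀ j ∈ Finset.range M,
        ∑ k ∈ Finset.range M, (T j * T k) * (Real.pi * ((T j) ^ 2 + (T k) ^ 2))⁻¹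
          ≤ 3 / Real.pi := by
      intro j hj
      have hterm : ∀ k ∈ Finset.range M,
          (T j * T k) * (Real.pi * ((T j) ^ 2 + (T k) ^ 2))⁻¹
            = Real.pi⁻¹ * ((2:ℝ) ^ j * 2 ^ k / (((2:ℝ) ^ j) ^ 2 + ((2:ℝ) ^ k) ^ 2)) := by
        intro k _
        simp only [hTdef]
        have ht0 : (0:ℝ) < 2 * R * n := by positivity
        have hd : (0:ℝ) < ((2:ℝ) ^ j) ^ 2 + ((2:ℝ) ^ k) ^ 2 := by positivity
        field_simp
      rw [Finset.sum_congr rfl hterm, ← Finset.mul_sum]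
      calc Real.pi⁻¹ * ∑ k ∈ Finset.range M,
            (2:ℝ) ^ j * 2 ^ k / (((2:ℝ) ^ j) ^ 2 + ((2:ℝ) ^ k) ^ 2)
          ≤ Real.pi⁻¹ * 3 := by
            refine mul_le_mul_of_nonneg_left ?_ (inv_nonneg.2 Real.pi_pos.le)
            exact Stmt16c.row_bound M j (Finset.mem_range.1 hj)
        _ = 3 / Real.pi := by rw [div_eq_mul_inv]; ring
    have hVb : ((M:ℝ)⁻¹) ^ 2 * ∑ j ∈ Finset.range M, ∑ k ∈ Finset.range M,
            (T j * T k) * (Real.pi * ((T j) ^ 2 + (T k) ^ 2))⁻¹ ≤ 1 / M := by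
      have hsum : ∑ j ∈ Finset.range M, ∑ k ∈ Finset.range M,
            (T j * T k) * (Real.pi * ((T j) ^ 2 + (T k) ^ 2))⁻¹ ≤ M * (3 / Real.pi) := by
        calc ∑ j ∈ Finset.range M, ∑ k ∈ Finset.range M,
              (T j * T k) * (Real.pi * ((T j) ^ 2 + (T k) ^ 2))⁻¹
            ≤ ∑ _j ∈ Finset.range M, (3 / Real.pi) := Finset.sum_le_sum hrow
          _ = M * (3 / Real.pi) := by
              rw [Finset.sum_const, Finset.card_range, nsmul_eq_mul]
      calc ((M:ℝ)⁻¹) ^ 2 * ∑ j ∈ Finset.range M, ∑ k ∈ Finset.range M,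
              (T j * T k) * (Real.pi * ((T j) ^ 2 + (T k) ^ 2))⁻¹
          ≤ ((M:ℝ)⁻¹) ^ 2 * ((M:ℝ) * (3 / Real.pi)) :=
            mul_le_mul_of_nonneg_left hsum (by positivity)
        _ = 3 / (Real.pi * M) := by field_simp
        _ ≤ 1 / M := by
            rw [div_le_div_iff₀ (by positivity) hMR]
            nlinarith [Real.pi_gt_three, hMR]
    calc C * (((M:ℝ)⁻¹) ^ 2 * ∑ j ∈ Finset.range M, ∑ k ∈ Finset.range M,
            (T j * T k) * (Real.pi * ((T j) ^ 2 + (T k) ^ 2))⁻¹)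
        ≤ C * (1 / M) := mul_le_mul_of_nonneg_left hVb hC.le
      _ ≤ 1 / n := by
          rw [mul_one_div, div_le_div_iff₀ hMR hn', hMdef]
          push_cast
          nlinarith [Nat.le_ceil C, hn']
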